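/- arXiv:2206.01568 — 2 statements merged into one kernel-verified Lean document; each statement's English description precedes it below -/
import Mathlib

section
/- Let S_1,...,S_n be subsets of [n] with i ∈ S_i and |S_i| = b for all i. Let c : [n] → [C] be a coloring such that any two distinct elements lying in a common set S_i receive different colors. Let {X_1,...,X_C} be pairwise independent Bernoulli random variables with Pr[X_c = 1] = p = b^{-1/5}. Define L to contain every element i with X_{c(i)} = 1, and additionally, for every set S_i with Σ_{j ∈ S_i} X_{c(j)} = 0, the element i. Then L is a hitting set (L ∩ S_i ≠ ∅ for all i) and E[|L|] ≤ n(b^{-1/5} + b^{-4/5}). -/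
open MeasureTheory ProbabilityTheory
open scoped Classical

section Aux

variable {Ω : Type*} [MeasureSpace Ω] [IsProbabilityMeasure (ℙ : Measure Ω)]

lemma aux_int_bdd {f : Ω → ℝ} (hf : Measurable f) (M : ℝ) (hM : ∀ ω, |f ω| ≤ M) :
    Integrable f ℙ := by
  refine (integrable_const M).mono' hf.aestronglyMeasurable ?_
  filter_upwards with ω using by simpa using hM ω

lemma aux_ind_int {A : Set Ω} (hA : MeasurableSet A) :
    Integrable (A.indicator (fun _ => (1:ℝ))) ℙ :=
  (integrable_const (1:ℝ)).indicator hA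

lemma aux_ind_integral {A : Set Ω} (hA : MeasurableSet A) :
    ∫ ω, A.indicator (fun _ => (1:ℝ)) ω = (ℙ A).toReal := by
  rw [integral_indicator_const (1:ℝ) hA]; simp; rfl

end Aux

/-- Hitting set via a coloring proper on each set and pairwise independent
Bernoulli(`b^{-1/5}`) variables per color: the set `L` (all `i` with `X_{c(i)} = 1`, plus
`i` for every unhit set `S_i`) is a hitting set of expected size at most
`n (b^{-1/5} + b^{-4/5})`. -/
theorem stmt6 {Ω : Type*} [MeasureSpace Ω] [IsProbabilityMeasure (ℙ : Measure Ω)]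
    (n b C : ℕ) (hb : 1 ≤ b)
    (S : Fin n → Finset (Fin n)) (hcard : ∀ i, (S i).card = b) (hmem : ∀ i, i ∈ S i)
    (c : Fin n → Fin C)
    (hcol : ∀ i : Fin n, ∀ j ∈ S i, ∀ j' ∈ S i, c j = c j' → j = j')
    (X : Fin C → Ω → ℝ) (hmeas : ∀ k, Measurable (X k))
    (h01 : ∀ k ω, X k ω = 0 ∨ X k ω = 1)
    (hp : ∀ k, ℙ {ω | X k ω = 1} = ENNReal.ofReal ((b : ℝ) ^ (-(1/5 : ℝ))))
    (hindep : ∀ k k', k ≠ k' → IndepFun (X k) (X k') ℙ) :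
    (∀ ω : Ω, ∀ i : Fin n, ∃ j ∈ S i,
        j ∈ Finset.univ.filter
          (fun i' : Fin n => X (c i') ω = 1 ∨ ∀ j' ∈ S i', X (c j') ω = 0)) ∧
    ∫ ω, ((Finset.univ.filter
        (fun i' : Fin n => X (c i') ω = 1 ∨ ∀ j' ∈ S i', X (c j') ω = 0)).card : ℝ)
      ≤ (n : ℝ) * ((b : ℝ) ^ (-(1/5 : ℝ)) + (b : ℝ) ^ (-(4/5 : ℝ))) := by
  set p : ℝ := (b : ℝ) ^ (-(1/5 : ℝ)) with hpdef
  have hb1 : (1:ℝ) ≤ (b:ℝ) := by exact_mod_cast hb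
  have hbpos : (0:ℝ) < (b:ℝ) := lt_of_lt_of_le one_pos hb1
  have hp0 : 0 < p := Real.rpow_pos_of_pos hbpos _
  have hp1 : p ≤ 1 := Real.rpow_le_one_of_one_le_of_nonpos hb1 (by norm_num)
  -- the sets {X k = 1} are measurable
  have hsetmeas : ∀ k : Fin C, MeasurableSet {ω | X k ω = 1} := fun k =>
    (hmeas k) (measurableSet_singleton 1)
  have hXbd : ∀ k ω, |X k ω| ≤ 1 := by
    intro k ω; rcases h01 k ω with h | h <;> simp [h]
  have hXint : ∀ k, Integrable (X k) ℙ := fun k => aux_int_bdd (hmeas k) 1 (hXbd k)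
  have hXXint : ∀ k k', Integrable (fun ω => X k ω * X k' ω) ℙ := by
    intro k k'
    refine aux_int_bdd ((hmeas k).mul (hmeas k')) 1 ?_
    intro ω; rw [abs_mul]
    calc |X k ω| * |X k' ω| ≤ 1 * 1 :=
          mul_le_mul (hXbd k ω) (hXbd k' ω) (abs_nonneg _) zero_le_one
      _ = 1 := by ring
  -- X k equals the indicator of {X k = 1}
  have hXind : ∀ k, X k = Set.indicator {ω | X k ω = 1} (fun _ => (1:ℝ)) := by
    intro k; funext ω
    rcases h01 k ω with h | h
    · rw [Set.indicator_apply]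
      simp only [Set.mem_setOf_eq, h]
      norm_num
    · rw [Set.indicator_apply]
      simp only [Set.mem_setOf_eq, h]
      norm_num
  have hEX : ∀ k, ∫ ω, X k ω = p := by
    intro k
    calc ∫ ω, X k ω = ∫ ω, Set.indicator {ω | X k ω = 1} (fun _ => (1:ℝ)) ω := by
          rw [← hXind k]
      _ = (ℙ {ω | X k ω = 1}).toReal := aux_ind_integral (hsetmeas k)
      _ = p := by rw [hp k, ENNReal.toReal_ofReal hp0.le]
  have hdiag : ∀ k, ∫ ω, X k ω * X k ω = p := by
    intro k
    have : (fun ω => X k ω * X k ω) = X k := by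
      funext ω; rcases h01 k ω with h | h <;> simp [h]
    rw [this]; exact hEX k
  have hoff : ∀ k k', k ≠ k' → ∫ ω, X k ω * X k' ω = p * p := by
    intro k k' hkk'
    rw [(hindep k k' hkk').integral_fun_mul_eq_mul_integral (hXint k).aestronglyMeasurable
      (hXint k').aestronglyMeasurable, hEX k, hEX k']
  -- per-set probability of being totally unhit
  have key : ∀ i : Fin n,
      (ℙ {ω | ∀ j ∈ S i, X (c j) ω = 0}).toReal ≤ (b : ℝ) ^ (-(4/5 : ℝ)) := by
    intro i
    set T := S i with hT
    set A0 : Set Ω := {ω | ∀ j ∈ T, X (c j) ω = 0} with hA0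
    have hA0meas : MeasurableSet A0 := by
      have : A0 = ⋂ j ∈ T, {ω | X (c j) ω = 0} := by ext ω; simp [hA0]
      rw [this]
      exact MeasurableSet.biInter T.countable_toSet
        (fun j _ => (hmeas (c j)) (measurableSet_singleton 0))
    set Y : Ω → ℝ := fun ω => ∑ j ∈ T, X (c j) ω with hY
    have hYint : Integrable Y ℙ := integrable_finset_sum _ (fun j _ => hXint _)
    have hEY : ∫ ω, Y ω = (b : ℝ) * p := by
      rw [hY]
      rw [integral_finset_sum _ (fun j _ => hXint _)]
      simp only [hEX, Finset.sum_const, nsmul_eq_mul, hcard i]; rw [hT, hcard i]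
    have hsq : ∀ ω, Y ω * Y ω = ∑ j ∈ T, ∑ j' ∈ T, X (c j) ω * X (c j') ω := by
      intro ω; rw [hY]; rw [Finset.sum_mul_sum]
    have hYYint : Integrable (fun ω => Y ω * Y ω) ℙ := by
      have : (fun ω => Y ω * Y ω)
          = fun ω => ∑ j ∈ T, ∑ j' ∈ T, X (c j) ω * X (c j') ω := funext hsq
      rw [this]
      exact integrable_finset_sum _ (fun j _ =>
        integrable_finset_sum _ (fun j' _ => hXXint _ _))
    have hEterm : ∀ j ∈ T, ∀ j' ∈ T,
        ∫ ω, X (c j) ω * X (c j') ω = if j = j' then p else p * p := by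
      intro j hj j' hj'
      by_cases h : j = j'
      · subst h; simp [hdiag]
      · have hc : c j ≠ c j' := fun hcc => h (hcol i j hj j' hj' hcc)
        simp [h, hoff _ _ hc]
    have hEYY : ∫ ω, Y ω * Y ω
        = (b : ℝ) * ((p - p * p) + (b : ℝ) * (p * p)) := by
      have : ∫ ω, Y ω * Y ω = ∑ j ∈ T, ∑ j' ∈ T, ∫ ω, X (c j) ω * X (c j') ω := by
        rw [funext hsq, integral_finset_sum _ (fun j _ =>
          integrable_finset_sum _ (fun j' _ => hXXint _ _))]
        exact Finset.sum_congr rfl (fun j _ => integral_finset_sum _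
          (fun j' _ => hXXint _ _))
      rw [this]
      have inner : ∀ j ∈ T, ∑ j' ∈ T, ∫ ω, X (c j) ω * X (c j') ω
          = (p - p * p) + (b : ℝ) * (p * p) := by
        intro j hj
        have : ∀ j' ∈ T, ∫ ω, X (c j) ω * X (c j') ω
            = (if j = j' then p - p * p else 0) + p * p := by
          intro j' hj'
          rw [hEterm j hj j' hj']
          by_cases h : j = j' <;> simp [h]
        rw [Finset.sum_congr rfl this, Finset.sum_add_distrib,
          Finset.sum_ite_eq T j (fun _ => p - p * p)]
        simp [hj, hcard i, hT, show j ∈ S i from hj]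
      rw [Finset.sum_congr rfl inner, Finset.sum_const, hcard i, nsmul_eq_mul]
    -- Chebyshev-type bound
    have hZint : Integrable (fun ω => (Y ω - (b:ℝ) * p) ^ 2) ℙ := by
      have : (fun ω => (Y ω - (b:ℝ) * p) ^ 2)
          = fun ω => Y ω * Y ω - (2 * ((b:ℝ) * p)) * Y ω + ((b:ℝ)*p)^2 := by
        funext ω; ring
      rw [this]
      exact ((hYYint.sub (hYint.const_mul _)).add (integrable_const _))
    have hEZ : ∫ ω, (Y ω - (b:ℝ) * p) ^ 2 = (b:ℝ) * p - (b:ℝ) * (p * p) := by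
      have h1 : (fun ω => (Y ω - (b:ℝ) * p) ^ 2)
          = fun ω => Y ω * Y ω - (2 * ((b:ℝ) * p)) * Y ω + ((b:ℝ)*p)^2 := by
        funext ω; ring
      have hint1 : Integrable (fun ω => Y ω * Y ω - 2 * ((b:ℝ) * p) * Y ω) ℙ :=
        hYYint.sub (hYint.const_mul _)
      rw [h1]
      rw [integral_add hint1 (integrable_const _),
        integral_sub hYYint (hYint.const_mul _), integral_const_mul, hEYY, hEY]
      simp only [integral_const, probReal_univ, measure_univ, ENNReal.toReal_one, smul_eq_mul, one_mul]
      ring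
    have hpt : ∀ ω, ((b:ℝ) * p) ^ 2 * A0.indicator (fun _ => (1:ℝ)) ω
        ≤ (Y ω - (b:ℝ) * p) ^ 2 := by
      intro ω
      by_cases h : ω ∈ A0
      · have hY0 : Y ω = 0 := Finset.sum_eq_zero (fun j hj => h j hj)
        rw [Set.indicator_of_mem h, hY0]
        ring_nf
        exact le_refl _
      · rw [Set.indicator_of_notMem h]
        simpa using sq_nonneg (Y ω - (b:ℝ)*p)
    have hmono : ((b:ℝ) * p) ^ 2 * (ℙ A0).toReal ≤ (b:ℝ) * p - (b:ℝ) * (p * p) := by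
      have : ∫ ω, ((b:ℝ) * p) ^ 2 * A0.indicator (fun _ => (1:ℝ)) ω
          ≤ ∫ ω, (Y ω - (b:ℝ) * p) ^ 2 :=
        integral_mono ((aux_ind_int hA0meas).const_mul _) hZint hpt
      rwa [integral_const_mul, aux_ind_integral hA0meas, hEZ] at this
    -- conclude
    have hbp0 : 0 < (b:ℝ) * p := mul_pos hbpos hp0
    have hq : (ℙ A0).toReal ≤ 1 / ((b:ℝ) * p) := by
      rw [le_div_iff₀ hbp0]
      nlinarith [hmono, (ℙ A0).toReal_nonneg, mul_pos hbpos (mul_pos hp0 hp0)]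
    have hbp45 : (b:ℝ) * p = (b:ℝ) ^ ((4:ℝ)/5) := by
      rw [hpdef]
      nth_rewrite 1 [← Real.rpow_one (b:ℝ)]
      rw [← Real.rpow_add hbpos]
      norm_num
    have : 1 / ((b:ℝ) * p) = (b : ℝ) ^ (-(4/5 : ℝ)) := by
      rw [hbp45, Real.rpow_neg hbpos.le, one_div]
    calc (ℙ A0).toReal ≤ 1 / ((b:ℝ) * p) := hq
      _ = (b : ℝ) ^ (-(4/5 : ℝ)) := this
  refine ⟨?_, ?_⟩
  · intro ω i
    by_cases h : ∀ j' ∈ S i, X (c j') ω = 0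
    · refine ⟨i, hmem i, ?_⟩
      simp only [Finset.mem_filter, Finset.mem_univ, true_and]
      exact Or.inr h
    · push_neg at h
      obtain ⟨j, hj, hj0⟩ := h
      refine ⟨j, hj, ?_⟩
      simp only [Finset.mem_filter, Finset.mem_univ, true_and]
      exact Or.inl ((h01 (c j) ω).resolve_left hj0)
  · -- expectation bound
    set P : Fin n → Ω → Prop :=
      fun i ω => X (c i) ω = 1 ∨ ∀ j' ∈ S i, X (c j') ω = 0 with hP
    have hAimeas : ∀ i, MeasurableSet {ω | P i ω} := by
      intro i
      have : {ω | P i ω} = {ω | X (c i) ω = 1} ∪ {ω | ∀ j ∈ S i, X (c j) ω = 0} := by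
        ext ω; simp [hP]
      rw [this]
      refine (hsetmeas (c i)).union ?_
      have : {ω | ∀ j ∈ S i, X (c j) ω = 0} = ⋂ j ∈ S i, {ω | X (c j) ω = 0} := by
        ext ω; simp
      rw [this]
      exact MeasurableSet.biInter (S i).countable_toSet
        (fun j _ => (hmeas (c j)) (measurableSet_singleton 0))
    have hA0meas : ∀ i : Fin n, MeasurableSet {ω | ∀ j ∈ S i, X (c j) ω = 0} := by
      intro i
      have : {ω | ∀ j ∈ S i, X (c j) ω = 0} = ⋂ j ∈ S i, {ω | X (c j) ω = 0} := by
        ext ω; simp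
      rw [this]
      exact MeasurableSet.biInter (S i).countable_toSet
        (fun j _ => (hmeas (c j)) (measurableSet_singleton 0))
    have hcardrw : ∀ ω, ((Finset.univ.filter (fun i' : Fin n => P i' ω)).card : ℝ)
        = ∑ i : Fin n, Set.indicator {ω' | P i ω'} (fun _ => (1:ℝ)) ω := by
      intro ω
      rw [Finset.card_filter]
      push_cast
      refine Finset.sum_congr rfl (fun i _ => ?_)
      rw [Set.indicator_apply]
      simp [Set.mem_setOf_eq]
    have hsum : ∫ ω, ((Finset.univ.filter (fun i' : Fin n => P i' ω)).card : ℝ)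
        = ∑ i : Fin n, (ℙ {ω | P i ω}).toReal := by
      calc ∫ ω, ((Finset.univ.filter (fun i' : Fin n => P i' ω)).card : ℝ)
          = ∫ ω, ∑ i : Fin n, Set.indicator {ω' | P i ω'} (fun _ => (1:ℝ)) ω := by
            exact integral_congr_ae (Filter.Eventually.of_forall hcardrw)
        _ = ∑ i : Fin n, ∫ ω, Set.indicator {ω' | P i ω'} (fun _ => (1:ℝ)) ω :=
            integral_finset_sum _ (fun i _ => aux_ind_int (hAimeas i))
        _ = ∑ i : Fin n, (ℙ {ω | P i ω}).toReal :=
            Finset.sum_congr rfl (fun i _ => aux_ind_integral (hAimeas i))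
    rw [hsum]
    have hbound : ∀ i : Fin n, (ℙ {ω | P i ω}).toReal ≤ p + (b : ℝ) ^ (-(4/5 : ℝ)) := by
      intro i
      have hsub : {ω | P i ω} ⊆ {ω | X (c i) ω = 1} ∪ {ω | ∀ j ∈ S i, X (c j) ω = 0} := by
        intro ω hω; exact hω
      have : ℙ {ω | P i ω}
          ≤ ℙ {ω | X (c i) ω = 1} + ℙ {ω | ∀ j ∈ S i, X (c j) ω = 0} :=
        le_trans (measure_mono hsub) (measure_union_le _ _)
      have h2 := ENNReal.toReal_mono (ENNReal.add_ne_top.2 ⟨measure_ne_top _ _, measure_ne_top _ _⟩) this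
      calc (ℙ {ω | P i ω}).toReal
          ≤ (ℙ {ω | X (c i) ω = 1} + ℙ {ω | ∀ j ∈ S i, X (c j) ω = 0}).toReal := h2
        _ ≤ (ℙ {ω | X (c i) ω = 1}).toReal
            + (ℙ {ω | ∀ j ∈ S i, X (c j) ω = 0}).toReal := ENNReal.toReal_add_le
        _ ≤ p + (b : ℝ) ^ (-(4/5 : ℝ)) := by
            refine add_le_add ?_ (key i)
            rw [hp (c i), ENNReal.toReal_ofReal hp0.le]
    calc ∑ i : Fin n, (ℙ {ω | P i ω}).toReal
        ≤ ∑ _i : Fin n, (p + (b : ℝ) ^ (-(4/5 : ℝ))) :=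
          Finset.sum_le_sum (fun i _ => hbound i)
      _ = (n : ℝ) * (p + (b : ℝ) ^ (-(4/5 : ℝ))) := by
          rw [Finset.sum_const, Finset.card_univ, Fintype.card_fin, nsmul_eq_mul]
end

section
/- Let S_1,...,S_n ⊆ [n] with |S_i| = b and i ∈ S_i, let c : [n] → [C] be injective on each S_i, and let H be a pairwise independent family of hash functions h : [C] → {0,1}^ℓ with 2^ℓ = b^{1/5} (assumed an integer power of 2). For each h define L_h = {i : h(c(i)) = 0} ∪ {i : h(c(j)) ≠ 0 for all j ∈ S_i}. Then there exists h* ∈ H with |L_{h*}| ≤ n(b^{-1/5} + b^{-4/5}), and every L_h is a hitting set. -/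
open MeasureTheory ProbabilityTheory
open scoped Classical

private lemma stmt17_cardFs {α : Type*} (s : Finset α) (P : α → Prop) [DecidablePred P] :
    (((s.filter P).card : ℝ)) = ∑ a ∈ s, if P a then (1:ℝ) else 0 := by
  rw [Finset.card_filter]; push_cast; rfl

private lemma stmt17_prodIte {α : Type*} [Fintype α] (A B : α → Prop)
    [DecidablePred A] [DecidablePred B] :
    ∑ a : α, (if A a then (1:ℝ) else 0) * (if B a then 1 else 0)
      = ((Finset.univ.filter fun a => A a ∧ B a).card : ℝ) := by
  rw [Finset.card_filter]
  push_cast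
  apply Finset.sum_congr rfl
  intro a _
  by_cases hA : A a <;> by_cases hB : B a <;> simp [hA, hB]

private lemma stmt17_cheb {H : Type*} [Fintype H] (X : H → ℝ) (μ : ℝ) (hμ : 0 < μ)
    [DecidablePred fun h : H => X h = 0]
    (h1 : ∑ h : H, X h = μ * (Fintype.card H : ℝ))
    (h2 : ∑ h : H, (X h)^2 ≤ μ * (Fintype.card H : ℝ) + μ^2 * (Fintype.card H : ℝ)) :
    ((Finset.univ.filter (fun h => X h = 0)).card : ℝ) ≤ (Fintype.card H : ℝ) / μ := by
  set N : ℝ := (Fintype.card H : ℝ)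
  have key : μ^2 * ((Finset.univ.filter (fun h => X h = 0)).card : ℝ)
      ≤ ∑ h : H, (X h - μ)^2 := by
    have h3 : ∑ h ∈ Finset.univ.filter (fun h => X h = 0), (X h - μ)^2
        ≤ ∑ h : H, (X h - μ)^2 :=
      Finset.sum_le_sum_of_subset_of_nonneg (Finset.filter_subset _ _)
        (fun _ _ _ => sq_nonneg _)
    calc μ^2 * ((Finset.univ.filter (fun h => X h = 0)).card : ℝ)
        = ∑ h ∈ Finset.univ.filter (fun h => X h = 0), (X h - μ)^2 := by
          rw [Finset.sum_congr rfl (fun h hh => by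
            rw [(Finset.mem_filter.mp hh).2]), Finset.sum_const]
          simp [mul_comm]
      _ ≤ _ := h3
  have expand : ∑ h : H, (X h - μ)^2
      = ∑ h : H, (X h)^2 - 2*μ*(∑ h : H, X h) + N * μ^2 := by
    rw [Finset.sum_congr rfl (fun h _ => by ring_nf :
      ∀ h ∈ Finset.univ, (X h - μ)^2 = (X h)^2 - 2*μ*X h + μ^2)]
    rw [Finset.sum_add_distrib, Finset.sum_sub_distrib, ← Finset.mul_sum, Finset.sum_const]
    simp [N, mul_comm]
  have hfin : μ^2 * ((Finset.univ.filter (fun h => X h = 0)).card : ℝ) ≤ μ * N := by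
    calc μ^2 * _ ≤ ∑ h : H, (X h - μ)^2 := key
      _ = ∑ h : H, (X h)^2 - 2*μ*(∑ h : H, X h) + N * μ^2 := expand
      _ ≤ (μ * N + μ^2 * N) - 2*μ*(μ*N) + N*μ^2 := by rw [h1]; linarith [h2]
      _ = μ * N := by ring
  rw [le_div_iff₀ hμ]
  nlinarith [hfin]

private lemma stmt17_mcard {H : Type*} [Fintype H] [Nonempty H]
    [MeasurableSpace H] [MeasurableSingletonClass H]
    (P : H → Prop) (x : ENNReal)
    (hm : (PMF.uniformOfFintype H).toMeasure {h | P h} = x) :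
    ((Finset.univ.filter P).card : ℝ) = x.toReal * (Fintype.card H : ℝ) := by
  rw [PMF.toMeasure_uniformOfFintype_apply _ (Set.toFinite _).measurableSet] at hm
  have hcard : Fintype.card {h : H // P h} = (Finset.univ.filter P).card :=
    Fintype.card_subtype _
  have := congrArg ENNReal.toReal hm
  rw [ENNReal.toReal_div] at this
  have hN : (0:ℝ) < (Fintype.card H : ℝ) := by positivity
  have h2 : ((Fintype.card {h : H // P h} : ℝ)) / (Fintype.card H : ℝ) = x.toReal := by
    simpa [Fintype.card_subtype] using this
  rw [hcard] at h2
  field_simp at h2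
  linarith [h2]

/-- Given sets `S_i ⊆ [n]` with `|S_i| = b`, `i ∈ S_i`, a coloring `c` injective on each
set, and a pairwise independent hash family `H` of functions `[C] → {0,1}^ℓ` with
`2^ℓ = b^{1/5}`, every `L_h = {i : h(c(i)) = 0} ∪ {i : ∀ j ∈ S_i, h(c(j)) ≠ 0}` is a
hitting set, and some `h*` gives `|L_{h*}| ≤ n (b^{-1/5} + b^{-4/5})`. -/
theorem stmt17 (n b C ℓ : ℕ) (hb : 1 ≤ b)
    (hℓ : (2 : ℝ) ^ ℓ = (b : ℝ) ^ ((1 : ℝ) / 5))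
    (S : Fin n → Finset (Fin n)) (hcard : ∀ i, (S i).card = b) (hmem : ∀ i, i ∈ S i)
    (c : Fin n → Fin C)
    (hinj : ∀ i : Fin n, ∀ j ∈ S i, ∀ j' ∈ S i, c j = c j' → j = j')
    {H : Type*} [Fintype H] [Nonempty H]
    [MeasurableSpace H] [MeasurableSingletonClass H]
    (f : H → Fin C → (Fin ℓ → Bool))
    (hpair : ∀ a b' : Fin C, a ≠ b' → ∀ u v : Fin ℓ → Bool,
      (PMF.uniformOfFintype H).toMeasure {h | f h a = u ∧ f h b' = v}
        = ((2 : ENNReal) ^ (2 * ℓ))⁻¹) :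
    (∀ h : H, ∀ i : Fin n, ∃ j ∈ S i,
        j ∈ Finset.univ.filter (fun i' : Fin n =>
          f h (c i') = (fun _ => false) ∨ ∀ j' ∈ S i', f h (c j') ≠ (fun _ => false))) ∧
    (∃ h : H,
        ((Finset.univ.filter (fun i' : Fin n =>
          f h (c i') = (fun _ => false) ∨
            ∀ j' ∈ S i', f h (c j') ≠ (fun _ => false))).card : ℝ)
          ≤ (n : ℝ) * ((b : ℝ) ^ (-(1/5 : ℝ)) + (b : ℝ) ^ (-(4/5 : ℝ)))) := by
  constructor
  · -- hitting set property
    intro h i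
    by_cases hex : ∃ j ∈ S i, f h (c j) = (fun _ => false)
    · obtain ⟨j, hj, hfj⟩ := hex
      exact ⟨j, hj, Finset.mem_filter.mpr ⟨Finset.mem_univ _, Or.inl hfj⟩⟩
    · push_neg at hex
      exact ⟨i, hmem i, Finset.mem_filter.mpr ⟨Finset.mem_univ _, Or.inr hex⟩⟩
  · -- the counting bound
    have hbR : (1:ℝ) ≤ (b:ℝ) := by exact_mod_cast hb
    have hbpos : (0:ℝ) < (b:ℝ) := by linarith
    by_cases hn : n = 0
    · subst hn
      refine ⟨Classical.arbitrary H, ?_⟩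
      simp
    by_cases hl : ℓ = 0
    · -- degenerate case: ℓ = 0 forces b = 1 and L_h = everything
      subst hl
      have hb1 : (b:ℝ) = 1 := by
        have h5 : ((b:ℝ)^((1:ℝ)/5))^(5:ℕ) = 1 := by rw [← hℓ]; norm_num
        rw [← Real.rpow_natCast ((b:ℝ)^((1:ℝ)/5)) 5, ← Real.rpow_mul hbpos.le] at h5
        norm_num at h5
        exact_mod_cast h5
      refine ⟨Classical.arbitrary H, ?_⟩
      have hz : ∀ g : Fin 0 → Bool, g = (fun _ => false) :=
        fun g => funext fun x => x.elim0
      have hfull : (Finset.univ.filter (fun i' : Fin n =>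
          f (Classical.arbitrary H) (c i') = (fun _ => false) ∨
            ∀ j' ∈ S i', f (Classical.arbitrary H) (c j') ≠ (fun _ => false)))
          = Finset.univ := by
        apply Finset.filter_true_of_mem
        intro i _
        exact Or.inl (hz _)
      rw [hfull, Finset.card_univ, Fintype.card_fin, hb1]
      rw [Real.one_rpow, Real.one_rpow]
      have : (0:ℝ) ≤ (n:ℝ) := by positivity
      linarith
    -- main case
    have hlpos : 1 ≤ ℓ := Nat.one_le_iff_ne_zero.mpr hl
    have npos : 0 < n := Nat.pos_of_ne_zero hn
    set N : ℝ := (Fintype.card H : ℝ) with hN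
    have hNpos : (0:ℝ) < N := by positivity
    set q : ℝ := ((2:ℝ)^ℓ)⁻¹ with hqdef
    have h2pos : (0:ℝ) < (2:ℝ)^ℓ := by positivity
    have hq : 0 < q := by positivity
    have hq5 : (b:ℝ)^(-(1/5:ℝ)) = q := by
      rw [Real.rpow_neg hbpos.le, hqdef, hℓ]
    set μ : ℝ := (b:ℝ) * q with hμdef
    have hμ : 0 < μ := by positivity
    have hμ45 : μ = (b:ℝ)^((4:ℝ)/5) := by
      rw [hμdef, hqdef, hℓ, ← Real.rpow_neg hbpos.le]
      nth_rewrite 1 [← Real.rpow_one (b:ℝ)]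
      rw [← Real.rpow_add hbpos]
      norm_num
    have hμ5 : (b:ℝ)^(-(4/5:ℝ)) = 1/μ := by
      rw [Real.rpow_neg hbpos.le, hμ45]
      norm_num
    -- b ≥ 2 and C ≥ 2
    have hb2 : 2 ≤ b := by
      have h1 : (2:ℝ) ≤ (2:ℝ)^ℓ := by
        calc (2:ℝ) = 2^1 := (pow_one 2).symm
        _ ≤ 2^ℓ := pow_le_pow_right₀ one_le_two hlpos
      have h2 : ((b:ℝ))^((1:ℝ)/5) ≤ (b:ℝ) := by
        nth_rewrite 2 [← Real.rpow_one (b:ℝ)]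
        exact Real.rpow_le_rpow_of_exponent_le hbR (by norm_num)
      have : (2:ℝ) ≤ (b:ℝ) := by rw [hℓ] at h1; linarith
      exact_mod_cast this
    have hC2 : 2 ≤ C := by
      have i0 : Fin n := ⟨0, npos⟩
      have himg : ((S i0).image c).card = b := by
        rw [Finset.card_image_of_injOn, hcard]
        intro x hx y hy hxy
        exact hinj i0 x hx y hy hxy
      have hle : ((S i0).image c).card ≤ C := by
        calc ((S i0).image c).card ≤ (Finset.univ : Finset (Fin C)).card :=
          Finset.card_le_card (Finset.subset_univ _)
        _ = C := by simp
      omega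
    -- a partner for every color
    have hother : ∀ a : Fin C, ∃ b' : Fin C, a ≠ b' := by
      intro a
      by_cases ha : a = ⟨0, by omega⟩
      · exact ⟨⟨1, by omega⟩, by rw [ha]; simp [Fin.ext_iff]⟩
      · exact ⟨⟨0, by omega⟩, fun hc => ha hc⟩
    -- pairwise counts
    have hpairR : ∀ a b' : Fin C, a ≠ b' → ∀ u v : Fin ℓ → Bool,
        ((Finset.univ.filter fun h : H => f h a = u ∧ f h b' = v).card : ℝ) = N * q^2 := by
      intro a b' hne u v
      have hm := stmt17_mcard (fun h : H => f h a = u ∧ f h b' = v) _ (hpair a b' hne u v)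
      rw [Finset.filter_congr_decidable] at hm
      have hx : (((2 : ENNReal) ^ (2 * ℓ))⁻¹).toReal = q^2 := by
        rw [ENNReal.toReal_inv, ENNReal.toReal_pow, hqdef, inv_pow, ← pow_mul, mul_comm ℓ 2]
        norm_num
      calc ((Finset.univ.filter fun h : H => f h a = u ∧ f h b' = v).card : ℝ)
          = (((2 : ENNReal) ^ (2 * ℓ))⁻¹).toReal * N := hm
        _ = N * q^2 := by rw [hx]; ring
    -- singleton counts
    have hsingleR : ∀ (a : Fin C) (u : Fin ℓ → Bool),
        ((Finset.univ.filter fun h : H => f h a = u).card : ℝ) = N * q := by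
      intro a u
      obtain ⟨b', hne⟩ := hother a
      have hfib := Finset.card_eq_sum_card_fiberwise
        (s := Finset.univ.filter fun h : H => f h a = u)
        (t := (Finset.univ : Finset (Fin ℓ → Bool)))
        (f := fun h => f h b') (fun x _ => Finset.mem_univ _)
      have hfibR : ((Finset.univ.filter fun h : H => f h a = u).card : ℝ)
          = ∑ v : Fin ℓ → Bool,
              ((Finset.univ.filter fun h : H => f h a = u ∧ f h b' = v).card : ℝ) := by
        have hff : ∀ v : Fin ℓ → Bool,
            ((Finset.univ.filter fun h : H => f h a = u).filter fun h => f h b' = v)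
              = Finset.univ.filter fun h : H => f h a = u ∧ f h b' = v :=
          fun v => Finset.filter_filter _ _ _
        rw [hfib]
        push_cast
        exact Finset.sum_congr rfl fun v _ => by rw [hff v]
      rw [hfibR, Finset.sum_congr rfl (fun v _ => hpairR a b' hne u v), Finset.sum_const,
        Finset.card_univ]
      have hcf : (Fintype.card (Fin ℓ → Bool)) = 2^ℓ := by simp
      rw [hcf, nsmul_eq_mul]
      push_cast
      rw [hqdef]
      field_simp
    -- the zero-count bound (Chebyshev)
    have hZi : ∀ i : Fin n,
        ((Finset.univ.filter fun h : H =>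
          ∀ j ∈ S i, f h (c j) ≠ (fun _ => false)).card : ℝ) ≤ N / μ := by
      intro i
      set X : H → ℝ :=
        fun h => (((S i).filter fun j => f h (c j) = (fun _ => false)).card : ℝ) with hX
      have hfeq : (Finset.univ.filter fun h : H => ∀ j ∈ S i, f h (c j) ≠ (fun _ => false))
          = (Finset.univ.filter fun h : H => X h = 0) := by
        apply Finset.filter_congr
        intro h _
        have hiff : X h = 0 ↔ ∀ j ∈ S i, ¬ f h (c j) = (fun _ => false) := by
          rw [hX, Nat.cast_eq_zero, Finset.card_eq_zero, Finset.filter_eq_empty_iff]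
        rw [hiff]
      have h1 : ∑ h : H, X h = μ * N := by
        have hXe : ∀ h : H,
            X h = ∑ j ∈ S i, if f h (c j) = (fun _ => false) then (1:ℝ) else 0 :=
          fun h => stmt17_cardFs _ _
        rw [Finset.sum_congr rfl (fun h _ => hXe h), Finset.sum_comm]
        have hinner : ∀ j ∈ S i,
            ∑ h : H, (if f h (c j) = (fun _ => false) then (1:ℝ) else 0) = N * q :=
          fun j _ => (stmt17_cardFs Finset.univ _).symm.trans
            (hsingleR (c j) (fun _ => false))
        rw [Finset.sum_congr rfl hinner, Finset.sum_const, hcard i, nsmul_eq_mul, hμdef]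
        ring
      have h2 : ∑ h : H, (X h)^2 ≤ μ * N + μ^2 * N := by
        have hXsq : ∀ h : H, (X h)^2 = ∑ j ∈ S i, ∑ j' ∈ S i,
            (if f h (c j) = (fun _ => false) then (1:ℝ) else 0)
              * (if f h (c j') = (fun _ => false) then (1:ℝ) else 0) := by
          intro h
          have hx : X h = ∑ j ∈ S i, if f h (c j) = (fun _ => false) then (1:ℝ) else 0 :=
            stmt17_cardFs _ _
          rw [sq, hx, Finset.sum_mul_sum]
        rw [Finset.sum_congr rfl (fun h _ => hXsq h), Finset.sum_comm]
        have hswap2 : ∀ j ∈ S i,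
            (∑ h : H, ∑ j' ∈ S i,
              (if f h (c j) = (fun _ => false) then (1:ℝ) else 0)
                * (if f h (c j') = (fun _ => false) then (1:ℝ) else 0))
            = ∑ j' ∈ S i, ∑ h : H,
              (if f h (c j) = (fun _ => false) then (1:ℝ) else 0)
                * (if f h (c j') = (fun _ => false) then (1:ℝ) else 0) :=
          fun j _ => Finset.sum_comm
        rw [Finset.sum_congr rfl hswap2]
        have hjj : ∀ j ∈ S i,
            (∑ j' ∈ S i, ∑ h : H,
              (if f h (c j) = (fun _ => false) then (1:ℝ) else 0)
                * (if f h (c j') = (fun _ => false) then (1:ℝ) else 0))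
            ≤ N * q + (b:ℝ) * (N * q^2) := by
          intro j hj
          have hterm : ∀ j' ∈ S i,
              (∑ h : H, (if f h (c j) = (fun _ => false) then (1:ℝ) else 0)
                * (if f h (c j') = (fun _ => false) then (1:ℝ) else 0))
              = ((Finset.univ.filter fun h : H =>
                  f h (c j) = (fun _ => false) ∧ f h (c j') = (fun _ => false)).card : ℝ) :=
            fun j' _ => stmt17_prodIte _ _
          rw [Finset.sum_congr rfl hterm, ← Finset.add_sum_erase _ _ hj]
          have hdiag : ((Finset.univ.filter fun h : H =>
              f h (c j) = (fun _ => false) ∧ f h (c j) = (fun _ => false)).card : ℝ)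
              = N * q := by
            have heq : (Finset.univ.filter fun h : H =>
                f h (c j) = (fun _ => false) ∧ f h (c j) = (fun _ => false))
                = Finset.univ.filter fun h : H => f h (c j) = (fun _ => false) :=
              Finset.filter_congr fun h _ => by simp
            rw [heq]
            exact hsingleR (c j) (fun _ => false)
          have herase : ∑ j' ∈ (S i).erase j,
              ((Finset.univ.filter fun h : H =>
                f h (c j) = (fun _ => false) ∧ f h (c j') = (fun _ => false)).card : ℝ)
              ≤ ((S i).erase j).card • (N * q^2) := by
            apply Finset.sum_le_card_nsmul
            intro j' hj'
            rcases Finset.mem_erase.mp hj' with ⟨hne, hj's⟩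
            have hcc : c j ≠ c j' := fun hcc => hne ((hinj i j hj j' hj's hcc).symm)
            exact (hpairR (c j) (c j') hcc (fun _ => false) (fun _ => false)).le
          have hec : (((S i).erase j).card • (N * q^2) : ℝ) ≤ (b:ℝ) * (N * q^2) := by
            rw [nsmul_eq_mul]
            apply mul_le_mul_of_nonneg_right _ (by positivity)
            have hcb : ((S i).erase j).card ≤ b := by
              rw [Finset.card_erase_of_mem hj, hcard i]
              omega
            exact_mod_cast hcb
          rw [hdiag]
          linarith [herase, hec]
        calc ∑ j ∈ S i, (∑ j' ∈ S i, ∑ h : H,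
              (if f h (c j) = (fun _ => false) then (1:ℝ) else 0)
                * (if f h (c j') = (fun _ => false) then (1:ℝ) else 0))
            ≤ ∑ _j ∈ S i, (N * q + (b:ℝ) * (N * q^2)) := Finset.sum_le_sum hjj
          _ = (b:ℝ) * (N * q + (b:ℝ) * (N * q^2)) := by
              rw [Finset.sum_const, hcard i, nsmul_eq_mul]
          _ = μ * N + μ^2 * N := by rw [hμdef]; ring
      rw [hfeq]
      exact stmt17_cheb X μ hμ h1 h2
    -- swapping sums over H and over [n]
    have hswapHn : ∀ (R : H → Fin n → Prop) [inst : ∀ h, DecidablePred (R h)]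
        [inst2 : ∀ i, DecidablePred fun h => R h i],
        ∑ h : H, ((Finset.univ.filter (R h)).card : ℝ)
          = ∑ i : Fin n, ((Finset.univ.filter fun h => R h i).card : ℝ) := by
      intro R _ _
      have l1 : ∀ h : H, ((Finset.univ.filter (R h)).card : ℝ)
          = ∑ i : Fin n, if R h i then (1:ℝ) else 0 := fun h => stmt17_cardFs _ _
      have l2 : ∀ i : Fin n, ((Finset.univ.filter fun h => R h i).card : ℝ)
          = ∑ h : H, if R h i then (1:ℝ) else 0 := fun i => stmt17_cardFs _ _
      rw [Finset.sum_congr rfl (fun h _ => l1 h),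
        Finset.sum_congr rfl (fun i _ => l2 i), Finset.sum_comm]
    -- split and sum
    have hsplit : ∀ h : H,
        ((Finset.univ.filter (fun i' : Fin n =>
          f h (c i') = (fun _ => false) ∨
            ∀ j' ∈ S i', f h (c j') ≠ (fun _ => false))).card : ℝ)
        ≤ ((Finset.univ.filter fun i' : Fin n => f h (c i') = (fun _ => false)).card : ℝ)
          + ((Finset.univ.filter fun i' : Fin n =>
              ∀ j' ∈ S i', f h (c j') ≠ (fun _ => false)).card : ℝ) := by
      intro h
      have hu := Finset.card_union_le
        (Finset.univ.filter fun i' : Fin n => f h (c i') = (fun _ => false))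
        (Finset.univ.filter fun i' : Fin n => ∀ j' ∈ S i', f h (c j') ≠ (fun _ => false))
      rw [← Finset.filter_or] at hu
      exact_mod_cast hu
    have hsum1 : ∑ h : H,
        ((Finset.univ.filter fun i' : Fin n => f h (c i') = (fun _ => false)).card : ℝ)
        = (n:ℝ) * (N * q) := by
      calc ∑ h : H,
          ((Finset.univ.filter fun i' : Fin n => f h (c i') = (fun _ => false)).card : ℝ)
          = ∑ i : Fin n,
            ((Finset.univ.filter fun h : H => f h (c i) = (fun _ => false)).card : ℝ) :=
          hswapHn (fun h i => f h (c i) = (fun _ => false))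
        _ = ∑ _i : Fin n, N * q :=
          Finset.sum_congr rfl fun i _ => hsingleR (c i) (fun _ => false)
        _ = (n:ℝ) * (N * q) := by
          rw [Finset.sum_const, Finset.card_univ, Fintype.card_fin, nsmul_eq_mul]
    have hsum2 : ∑ h : H,
        ((Finset.univ.filter fun i' : Fin n =>
          ∀ j' ∈ S i', f h (c j') ≠ (fun _ => false)).card : ℝ)
        ≤ (n:ℝ) * (N / μ) := by
      calc ∑ h : H, ((Finset.univ.filter fun i' : Fin n =>
            ∀ j' ∈ S i', f h (c j') ≠ (fun _ => false)).card : ℝ)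
          = ∑ i : Fin n, ((Finset.univ.filter fun h : H =>
            ∀ j' ∈ S i, f h (c j') ≠ (fun _ => false)).card : ℝ) :=
          hswapHn (fun h i => ∀ j' ∈ S i, f h (c j') ≠ (fun _ => false))
        _ ≤ ∑ _i : Fin n, N / μ := Finset.sum_le_sum fun i _ => hZi i
        _ = (n:ℝ) * (N / μ) := by
          rw [Finset.sum_const, Finset.card_univ, Fintype.card_fin, nsmul_eq_mul]
    have htotal : ∑ h : H,
        ((Finset.univ.filter (fun i' : Fin n =>
          f h (c i') = (fun _ => false) ∨
            ∀ j' ∈ S i', f h (c j') ≠ (fun _ => false))).card : ℝ)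
        ≤ ∑ _h : H, (n:ℝ) * (q + 1/μ) := by
      have hconst : ∑ _h : H, (n:ℝ) * (q + 1/μ) = N * ((n:ℝ) * (q + 1/μ)) := by
        rw [Finset.sum_const, Finset.card_univ, nsmul_eq_mul, hN]
      rw [hconst]
      calc ∑ h : H, ((Finset.univ.filter (fun i' : Fin n =>
            f h (c i') = (fun _ => false) ∨
              ∀ j' ∈ S i', f h (c j') ≠ (fun _ => false))).card : ℝ)
          ≤ ∑ h : H,
            (((Finset.univ.filter fun i' : Fin n =>
                f h (c i') = (fun _ => false)).card : ℝ)
              + ((Finset.univ.filter fun i' : Fin n =>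
                ∀ j' ∈ S i', f h (c j') ≠ (fun _ => false)).card : ℝ)) :=
          Finset.sum_le_sum fun h _ => hsplit h
        _ = (∑ h : H, ((Finset.univ.filter fun i' : Fin n =>
              f h (c i') = (fun _ => false)).card : ℝ))
            + ∑ h : H, ((Finset.univ.filter fun i' : Fin n =>
              ∀ j' ∈ S i', f h (c j') ≠ (fun _ => false)).card : ℝ) :=
          Finset.sum_add_distrib
        _ ≤ (n:ℝ) * (N * q) + (n:ℝ) * (N / μ) := by rw [hsum1]; linarith [hsum2]
        _ = N * ((n:ℝ) * (q + 1/μ)) := by field_simp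
    obtain ⟨h, _, hle⟩ := Finset.exists_le_of_sum_le Finset.univ_nonempty htotal
    refine ⟨h, ?_⟩
    rw [hq5, hμ5]
    calc ((Finset.univ.filter (fun i' : Fin n =>
          f h (c i') = (fun _ => false) ∨
            ∀ j' ∈ S i', f h (c j') ≠ (fun _ => false))).card : ℝ)
        ≤ (n:ℝ) * (q + 1/μ) := hle
      _ = (n:ℝ) * (q + 1/μ) := rfl
end
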